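/- Let 𝒜 = {A₁,…,A_m} be an arrangement of finite cameras with distinct centers, and let E⁺⁺ be the union of the sets E_j over those j such that the center c_j has positive depth in every camera A_i with i ≠ j. Then E⁺⁺ is contained in the Euclidean closure of the chiral joint image X_𝒜 in (ℙ²)^m. -/

import Mathlib

open Matrix

noncomputable section

/-- Left 3x3 block `G` of a 3x4 camera matrix `A = [G | t]`. -/
def leftBlock (A : Matrix (Fin 3) (Fin 4) ℝ) : Matrix (Fin 3) (Fin 3) ℝ :=
  Matrix.of fun i j => A i j.castSucc

/-- Last column `t` of a 3x4 camera matrix `A = [G | t]`. -/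
def tCol (A : Matrix (Fin 3) (Fin 4) ℝ) : Fin 3 → ℝ := fun i => A i 3

/-- A camera is finite if its left 3x3 block is invertible. -/
def FiniteCam (A : Matrix (Fin 3) (Fin 4) ℝ) : Prop := (leftBlock A).det ≠ 0

/-- The center `(-G⁻¹ t, 1)` of a finite camera. -/
def camCenter (A : Matrix (Fin 3) (Fin 4) ℝ) : Fin 4 → ℝ :=
  Fin.snoc (-((leftBlock A)⁻¹ *ᵥ tCol A)) 1

/-- The principal ray `det G • (third row of A)`. -/
def principalRay (A : Matrix (Fin 3) (Fin 4) ℝ) : Fin 4 → ℝ :=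
  (leftBlock A).det • A 2

/-- `n_∞ = (0,0,0,1)`. -/
def nInf : Fin 4 → ℝ := Fin.snoc (0 : Fin 3 → ℝ) 1

/-- The chiral domain `D_𝒜`: the closure, within `ℝ⁴ ∖ {0}` (i.e. ambient closure
intersected with `ℝ⁴ ∖ {0}`), of the set of finite vectors (last coordinate nonzero)
having positive depth in every camera of the arrangement. -/
def chiralDomain {m : ℕ} (A : Fin m → Matrix (Fin 3) (Fin 4) ℝ) : Set (Fin 4 → ℝ) :=
  closure {q : Fin 4 → ℝ | nInf ⬝ᵥ q ≠ 0 ∧ ∀ i, 0 < (principalRay (A i) ⬝ᵥ q) * (nInf ⬝ᵥ q)}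
    ∩ {q : Fin 4 → ℝ | q ≠ 0}

/-- The joint image `J_𝒜` (at the level of representatives): tuples of nonzero vectors
representing `(A₁ q, …, A_m q)` for some `q ∈ ℙ³` that is not a camera center. -/
def jointImage {m : ℕ} (A : Fin m → Matrix (Fin 3) (Fin 4) ℝ) :
    Set (Fin m → Fin 3 → ℝ) :=
  {p | (∀ i, p i ≠ 0) ∧
    ∃ q : Fin 4 → ℝ, q ≠ 0 ∧ ∀ i, ∃ c : ℝ, c ≠ 0 ∧ p i = c • (A i *ᵥ q)}

/-- The chiral joint image `X_𝒜 = φ_𝒜(D_𝒜)` (at the level of representatives). -/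
def chiralJointImage {m : ℕ} (A : Fin m → Matrix (Fin 3) (Fin 4) ℝ) :
    Set (Fin m → Fin 3 → ℝ) :=
  {p | (∀ i, p i ≠ 0) ∧
    ∃ q ∈ chiralDomain A, ∀ i, ∃ c : ℝ, c ≠ 0 ∧ p i = c • (A i *ᵥ q)}

/-- `a_i = G_i⁻¹ p_i`. -/
def aVec (A : Matrix (Fin 3) (Fin 4) ℝ) (p : Fin 3 → ℝ) : Fin 3 → ℝ :=
  (leftBlock A)⁻¹ *ᵥ p

/-- `b_ij = G_i⁻¹ t_i - G_j⁻¹ t_j`. -/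
def bVec (A B : Matrix (Fin 3) (Fin 4) ℝ) : Fin 3 → ℝ :=
  (leftBlock A)⁻¹ *ᵥ tCol A - (leftBlock B)⁻¹ *ᵥ tCol B

/-- The chirality constraint set `C_𝒜`, cut out by the biquadratic inequalities
`det(G_i)·p_{i3}·((a_i × a_j)ᵀ(b_ij × a_j)) ≥ 0` and
`det(G_i)·det(G_j)·p_{i3}·p_{j3}·((b_ij × a_i)ᵀ(b_ij × a_j)) ≥ 0` for all `i, j`. -/
def CSet {m : ℕ} (A : Fin m → Matrix (Fin 3) (Fin 4) ℝ) :
    Set (Fin m → Fin 3 → ℝ) :=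
  {p | ∀ i j,
    0 ≤ (leftBlock (A i)).det * p i 2 *
        ((aVec (A i) (p i) ⨯₃ aVec (A j) (p j)) ⬝ᵥ (bVec (A i) (A j) ⨯₃ aVec (A j) (p j))) ∧
    0 ≤ (leftBlock (A i)).det * (leftBlock (A j)).det * p i 2 * p j 2 *
        ((bVec (A i) (A j) ⨯₃ aVec (A i) (p i)) ⬝ᵥ (bVec (A i) (A j) ⨯₃ aVec (A j) (p j)))}

/-- `E_j`: tuples whose `i`-th coordinate, for `i ≠ j`, represents the epipole
`e_ij = A_i c_j`, with free `j`-th coordinate. -/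
def Eset {m : ℕ} (A : Fin m → Matrix (Fin 3) (Fin 4) ℝ) (j : Fin m) :
    Set (Fin m → Fin 3 → ℝ) :=
  {p | (∀ i, p i ≠ 0) ∧ ∀ i, i ≠ j → ∃ c : ℝ, c ≠ 0 ∧ p i = c • (A i *ᵥ camCenter (A j))}

/-- `E⁺⁺`: the union of the `E_j` over those `j` whose center has positive depth in every
other camera. -/
def Eplusplus {m : ℕ} (A : Fin m → Matrix (Fin 3) (Fin 4) ℝ) : Set (Fin m → Fin 3 → ℝ) :=
  ⋃ j ∈ {j : Fin m | ∀ i, i ≠ j →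
      0 < (principalRay (A i) ⬝ᵥ camCenter (A j)) * (nInf ⬝ᵥ camCenter (A j))}, Eset A j

lemma fin3_last : (3 : Fin 4) = Fin.last 3 := rfl

lemma mulVec_snoc (M : Matrix (Fin 3) (Fin 4) ℝ) (x : Fin 3 → ℝ) (s : ℝ) :
    M *ᵥ Fin.snoc x s = leftBlock M *ᵥ x + s • tCol M := by
  funext i
  simp only [Matrix.mulVec, dotProduct, Fin.sum_univ_castSucc, Fin.snoc_castSucc,
    Fin.snoc_last, Pi.add_apply, Pi.smul_apply, leftBlock, tCol, Matrix.of_apply, smul_eq_mul,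
    fin3_last]
  ring

lemma mulVec_camCenter (M : Matrix (Fin 3) (Fin 4) ℝ) (h : FiniteCam M) :
    M *ᵥ camCenter M = 0 := by
  rw [camCenter, mulVec_snoc, Matrix.mulVec_neg, Matrix.mulVec_mulVec,
    Matrix.mul_nonsing_inv _ (Ne.isUnit h), Matrix.one_mulVec]
  simp

lemma mulVec_inv_snoc (M : Matrix (Fin 3) (Fin 4) ℝ) (h : FiniteCam M) (v : Fin 3 → ℝ) :
    M *ᵥ Fin.snoc ((leftBlock M)⁻¹ *ᵥ v) 0 = v := by
  rw [mulVec_snoc, Matrix.mulVec_mulVec, Matrix.mul_nonsing_inv _ (Ne.isUnit h), Matrix.one_mulVec]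
  simp

lemma dot_nInf (x : Fin 4 → ℝ) : nInf ⬝ᵥ x = x 3 := by
  simp [nInf, dotProduct, Fin.sum_univ_castSucc, fin3_last]
  rw [show (Fin.snoc (0 : Fin 3 → ℝ) 1 : Fin 4 → ℝ) 3 = 1 by rw [fin3_last]; exact Fin.snoc_last _ _, one_mul]

lemma dot_principalRay (M : Matrix (Fin 3) (Fin 4) ℝ) (x : Fin 4 → ℝ) :
    principalRay M ⬝ᵥ x = (leftBlock M).det * (M *ᵥ x) 2 := by
  simp [principalRay, smul_dotProduct, Matrix.mulVec]

lemma camCenter_last (M : Matrix (Fin 3) (Fin 4) ℝ) : camCenter M 3 = 1 := by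
  rw [camCenter, fin3_last]; exact Fin.snoc_last _ _

lemma snoc_last_zero (x : Fin 3 → ℝ) : (Fin.snoc x 0 : Fin 4 → ℝ) 3 = 0 := by
  show (Fin.snoc x 0 : Fin 4 → ℝ) (Fin.last 3) = 0
  exact Fin.snoc_last _ _

lemma tendsto_aux {V : Type*} [AddCommGroup V] [Module ℝ V] [TopologicalSpace V]
    [IsTopologicalAddGroup V] [ContinuousSMul ℝ V] (v0 v1 v2 : V) (σ : ℝ) :
    Filter.Tendsto (fun ε : ℝ => v0 + (σ*ε) • v1 + ((σ*ε)*(σ*ε)) • v2)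
      (nhdsWithin 0 (Set.Ioi 0)) (nhds v0) := by
  have h : Continuous fun ε : ℝ => v0 + (σ*ε) • v1 + ((σ*ε)*(σ*ε)) • v2 := by fun_prop
  have h0 := h.tendsto 0
  simp only [mul_zero, zero_smul, add_zero, zero_mul] at h0
  exact h0.mono_left nhdsWithin_le_nhds

/-- `E⁺⁺` is contained in the Euclidean closure of the chiral joint image in
`(ℙ²)^m` (at the level of representatives). -/
theorem Eplusplus_subset_closure_chiralJointImage {m : ℕ}
    (A : Fin m → Matrix (Fin 3) (Fin 4) ℝ)
    (hfin : ∀ i, FiniteCam (A i))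
    (hdist : ∀ i j, i ≠ j → camCenter (A i) ≠ camCenter (A j)) :
    Eplusplus A ⊆ closure (chiralJointImage A) := by
  intro p hp
  simp only [Eplusplus, Set.mem_iUnion, Set.mem_setOf_eq, exists_prop] at hp
  obtain ⟨j, hj, hpne, hco⟩ := hp
  choose c hc0 hcp using hco
  set D := (leftBlock (A j)).det with hD
  have hDne : D ≠ 0 := hfin j
  -- choose sign σ and perturbation w2
  obtain ⟨σ, w2, hσ, hkey⟩ :
      ∃ σ w2 : ℝ, σ ≠ 0 ∧ ∀ ε : ℝ, 0 < ε →
        0 < D * ((σ * ε) * p j 2 + ((σ*ε)*(σ*ε)) * w2) := by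
    by_cases h2 : p j 2 = 0
    · refine ⟨1, D, one_ne_zero, fun ε hε => ?_⟩
      have : D * ((1 * ε) * p j 2 + ((1*ε)*(1*ε)) * D) = (D*ε)^2 := by rw [h2]; ring
      rw [this]; positivity
    · refine ⟨D * p j 2, 0, mul_ne_zero hDne h2, fun ε hε => ?_⟩
      have : D * (((D * p j 2) * ε) * p j 2 + (((D*p j 2)*ε)*((D*p j 2)*ε)) * 0)
          = (D * p j 2)^2 * ε := by ring
      rw [this]; positivity
  set w : Fin 3 → ℝ := fun k => if k = 2 then w2 else 0 with hw
  set cj := camCenter (A j) with hcj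
  set a : Fin 4 → ℝ := Fin.snoc ((leftBlock (A j))⁻¹ *ᵥ p j) 0 with ha
  set b : Fin 4 → ℝ := Fin.snoc ((leftBlock (A j))⁻¹ *ᵥ w) 0 with hb
  set q : ℝ → Fin 4 → ℝ := fun u => cj + u • a + (u*u) • b with hq
  have hAq : ∀ (M : Matrix (Fin 3) (Fin 4) ℝ) u,
      M *ᵥ q u = M *ᵥ cj + u • (M *ᵥ a) + (u*u) • (M *ᵥ b) := by
    intro M u
    simp [hq, Matrix.mulVec_add, Matrix.mulVec_smul]
  have hAjq : ∀ u, A j *ᵥ q u = u • p j + (u*u) • w := by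
    intro u
    rw [hAq, hcj, mulVec_camCenter _ (hfin j), ha, hb,
      mulVec_inv_snoc _ (hfin j), mulVec_inv_snoc _ (hfin j)]
    simp
  have hq3 : ∀ u, q u 3 = 1 := by
    intro u
    simp only [hq, Pi.add_apply, Pi.smul_apply, hcj, camCenter_last, ha, hb, snoc_last_zero,
      smul_eq_mul, mul_zero, add_zero]
  have hqdot : ∀ u, nInf ⬝ᵥ q u = 1 := fun u => by rw [dot_nInf, hq3]
  -- the approximating family
  set f : ℝ → Fin m → Fin 3 → ℝ := fun ε i =>
    if h : i = j then p j + (σ*ε) • w else (c i h) • (A i *ᵥ q (σ*ε)) with hf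
  have htend : Filter.Tendsto f (nhdsWithin 0 (Set.Ioi 0)) (nhds p) := by
    rw [tendsto_pi_nhds]
    intro i
    by_cases h : i = j
    · subst h
      simp only [hf, dif_pos]
      have := tendsto_aux (p i) w (0 : Fin 3 → ℝ) σ
      simpa using this
    · simp only [hf, dif_neg h]
      have h1 : ∀ ε : ℝ, c i h • (A i *ᵥ q (σ*ε)) =
          (c i h • (A i *ᵥ cj)) + (σ*ε) • (c i h • (A i *ᵥ a))
            + ((σ*ε)*(σ*ε)) • (c i h • (A i *ᵥ b)) := by
        intro ε
        rw [hAq]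
        simp [smul_add, smul_smul, mul_comm]
      simp only [h1]
      have := tendsto_aux (c i h • (A i *ᵥ cj)) (c i h • (A i *ᵥ a)) (c i h • (A i *ᵥ b)) σ
      rw [hcp i h]
      exact this
  have hposj : ∀ ε : ℝ, 0 < ε → 0 < (principalRay (A j) ⬝ᵥ q (σ*ε)) * (nInf ⬝ᵥ q (σ*ε)) := by
    intro ε hε
    rw [hqdot, mul_one, dot_principalRay, hAjq]
    have : (((σ*ε) • p j + ((σ*ε)*(σ*ε)) • w) 2) = (σ*ε) * p j 2 + ((σ*ε)*(σ*ε)) * w2 := by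
      simp [hw]
    rw [this]
    exact hkey ε hε
  -- eventual positivity for i ≠ j and eventual nonvanishing
  have hevd : ∀ᶠ ε in nhdsWithin (0:ℝ) (Set.Ioi 0),
      ∀ i, i ≠ j → 0 < principalRay (A i) ⬝ᵥ q (σ*ε) := by
    rw [Filter.eventually_all]
    intro i
    by_cases h : i = j
    · exact Filter.Eventually.of_forall (fun ε hne => absurd h hne)
    · have hpos : 0 < principalRay (A i) ⬝ᵥ cj := by
        have := hj i h
        have hcj3 : cj 3 = 1 := camCenter_last (A j)
        rwa [dot_nInf, hcj3, mul_one] at this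
      have h1 : ∀ ε : ℝ, principalRay (A i) ⬝ᵥ q (σ*ε) =
          (principalRay (A i) ⬝ᵥ cj) + (σ*ε) * (principalRay (A i) ⬝ᵥ a)
            + ((σ*ε)*(σ*ε)) * (principalRay (A i) ⬝ᵥ b) := by
        intro ε
        simp [hq, dotProduct_add, dotProduct_smul, smul_eq_mul]
      have ht : Filter.Tendsto (fun ε => principalRay (A i) ⬝ᵥ q (σ*ε))
          (nhdsWithin 0 (Set.Ioi 0)) (nhds (principalRay (A i) ⬝ᵥ cj)) := by
        simp only [h1]
        exact tendsto_aux _ _ _ σ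
      filter_upwards [ht.eventually (eventually_gt_nhds hpos)] with ε hε
      intro _
      exact hε
  have hevne : ∀ᶠ ε in nhdsWithin (0:ℝ) (Set.Ioi 0), ∀ i, f ε i ≠ 0 := by
    rw [Filter.eventually_all]
    intro i
    have := (tendsto_pi_nhds.mp htend) i
    exact this.eventually_ne (hpne i)
  have hevpos : ∀ᶠ ε in nhdsWithin (0:ℝ) (Set.Ioi 0), (0:ℝ) < ε :=
    eventually_mem_nhdsWithin
  refine mem_closure_of_tendsto htend ?_
  filter_upwards [hevd, hevne, hevpos] with ε hεd hεne hεpos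
  have hσε : σ * ε ≠ 0 := mul_ne_zero hσ (ne_of_gt hεpos)
  refine ⟨hεne, q (σ*ε), ⟨subset_closure ⟨?_, ?_⟩, ?_⟩, ?_⟩
  · rw [hqdot]; exact one_ne_zero
  · intro i
    by_cases h : i = j
    · subst h; exact hposj ε hεpos
    · rw [hqdot, mul_one]; exact hεd i h
  · intro h0
    have := hq3 (σ*ε)
    rw [h0] at this
    simp at this
  · intro i
    by_cases h : i = j
    · subst h
      refine ⟨(σ*ε)⁻¹, inv_ne_zero hσε, ?_⟩
      simp only [hf, dif_pos]
      rw [hAjq, smul_add, smul_smul, smul_smul, inv_mul_cancel₀ hσε]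
      rw [show (σ*ε)⁻¹ * ((σ*ε)*(σ*ε)) = σ*ε by field_simp]
      simp
    · exact ⟨c i h, hc0 i h, by simp only [hf, dif_neg h]⟩
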